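/- arXiv:1601.06183 — 2 statements merged into one kernel-verified Lean document; each statement's English description precedes it below -/
import Mathlib

section
/- Soundness of the differential cut axiom DC at the semantic level: let Sol be a set of functions φ : [0, r_φ] → S (solutions of a fixed differential equation from a fixed initial state, closed under restriction to initial subintervals [0,s] for 0 ≤ s ≤ r_φ), and let Q, R, P be predicates on S. Suppose every φ ∈ Sol that satisfies Q at all times also satisfies R at its endpoint. Then: every φ ∈ Sol satisfying Q at all times has P at its endpoint if and only if every φ ∈ Sol satisfying Q ∧ R at all times has P at its endpoint. -/
theorem DC_sound {S : Type*} (Sol : Set (ℝ × (ℝ → S))) (Q R P : S → Prop)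
    (hdur : ∀ p ∈ Sol, 0 ≤ p.1)
    (hrestrict : ∀ p ∈ Sol, ∀ s : ℝ, 0 ≤ s → s ≤ p.1 → (s, p.2) ∈ Sol)
    (hR : ∀ p ∈ Sol, (∀ t ∈ Set.Icc (0:ℝ) p.1, Q (p.2 t)) → R (p.2 p.1)) :
    (∀ p ∈ Sol, (∀ t ∈ Set.Icc (0:ℝ) p.1, Q (p.2 t)) → P (p.2 p.1)) ↔
      (∀ p ∈ Sol, (∀ t ∈ Set.Icc (0:ℝ) p.1, Q (p.2 t) ∧ R (p.2 t)) → P (p.2 p.1)) := by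
  constructor
  · intro h p hp hQR
    exact h p hp fun t ht => (hQR t ht).1
  · intro h p hp hQ
    refine h p hp fun t ht => ⟨hQ t ht, ?_⟩
    have hmem := hrestrict p hp t ht.1 ht.2
    have := hR (t, p.2) hmem fun s hs => hQ s ⟨hs.1, hs.2.trans ht.2⟩
    exact this
end

section
/- Soundness of the constant-solution axiom DS (without domain constraint): let f ∈ ℝⁿ be a constant vector and ν ∈ ℝⁿ an initial state, and let P : ℝⁿ → Prop. Then P(φ(s)) holds at the endpoint of every solution φ : [0,s] → ℝⁿ of the ODE x′ = f with φ(0) = ν (i.e. every differentiable φ with φ′(t) = f for all t ∈ [0,s]) if and only if for all t ≥ 0, P(ν + t·f) holds. -/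
theorem DS_sound (n : ℕ) (f ν : Fin n → ℝ) (P : (Fin n → ℝ) → Prop) :
    (∀ s : ℝ, 0 ≤ s → ∀ φ : ℝ → (Fin n → ℝ), φ 0 = ν →
        (∀ t ∈ Set.Icc (0:ℝ) s, HasDerivWithinAt φ f (Set.Icc 0 s) t) → P (φ s)) ↔
      ∀ t : ℝ, 0 ≤ t → P (ν + t • f) := by
  constructor
  · intro h t ht
    have := h t ht (fun u => ν + u • f) (by simp) ?_
    · exact this
    · intro u hu
      have : HasDerivWithinAt (fun u : ℝ => ν + u • f) ((1:ℝ) • f) (Set.Icc 0 t) u := by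
        exact ((hasDerivWithinAt_id u _).smul_const f).const_add ν
      simpa using this
  · intro h s hs φ hφ0 hd
    have key : ∀ x ∈ Set.Icc (0:ℝ) s, (fun u => φ u - u • f) x = (fun u => φ u - u • f) 0 := by
      apply constant_of_has_deriv_right_zero
      · intro x hx
        exact ((hd x hx).sub ((hasDerivWithinAt_id x _).smul_const f)).continuousWithinAt
      · intro x hx
        have h1 : HasDerivWithinAt φ f (Set.Ici x) x :=
          (hd x (Set.mem_Icc_of_Ico hx)).mono_of_mem_nhdsWithin
            (Filter.mem_of_superset (Icc_mem_nhdsGE hx.2)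
              (Set.Icc_subset_Icc_left hx.1))
        have h2 : HasDerivWithinAt (fun u : ℝ => u • f) f (Set.Ici x) x := by
          simpa using ((hasDerivWithinAt_id x (Set.Ici x)).smul_const f)
        exact (by simpa only [sub_self] using h1.sub h2 : HasDerivWithinAt (φ - fun u : ℝ => u • f) 0 (Set.Ici x) x)
    have := key s (Set.right_mem_Icc.2 hs)
    simp only [hφ0, zero_smul, sub_zero] at this
    have hφs : φ s = ν + s • f := by
      rw [← this]; abel
    rw [hφs]; exact h s hs
end
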